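/- Let Y be a β-homogeneous F-space with β > 0, X an Abelian group, ε ≥ 0, a = (2^(β+2) + 3^(β+1) + 3)/8^β, and suppose f : X → Y satisfies ‖f(2x) - (3/8)f(4x) + (1/8)f(-4x)‖ ≤ a·ε for all x ∈ X. Then for every n ≥ 1 and all x ∈ X, ‖f(2x) - ((2^n+1)/(2·4^n))·f(2^(n+1)x) + ((2^n-1)/(2·4^n))·f(-2^(n+1)x)‖ ≤ b·ε, where b = a·(1 + Σ_{k=2}^∞ (((2^(k-1)+1)/(2·4^(k-1)))^β + ((2^(k-1)-1)/(2·4^(k-1)))^β)). -/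

import Mathlib

private noncomputable def cc (n : ℕ) : ℝ := ((2:ℝ)^n + 1) / (2 * 4^n)
private noncomputable def dd (n : ℕ) : ℝ := ((2:ℝ)^n - 1) / (2 * 4^n)

private lemma cc_nonneg (n : ℕ) : 0 ≤ cc n := by unfold cc; positivity

private lemma one_le_two_pow (n : ℕ) : (1:ℝ) ≤ 2^n := one_le_pow₀ (by norm_num)

private lemma dd_nonneg (n : ℕ) : 0 ≤ dd n := by
  unfold dd
  apply div_nonneg
  · linarith [one_le_two_pow n]
  · positivity

private lemma dd_le_cc (n : ℕ) : dd n ≤ cc n := by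
  unfold cc dd
  gcongr
  linarith

private lemma cc_le (n : ℕ) : cc n ≤ (1/2:ℝ)^n := by
  unfold cc
  rw [div_le_iff₀ (by positivity)]
  have h1 := one_le_two_pow n
  have h2 : ((1:ℝ)/2)^n * (2 * 4^n) = 2 * 2^n := by
    rw [show (4:ℝ) = 2*2 by norm_num, mul_pow, div_pow, one_pow]
    field_simp
  rw [h2]; linarith

private lemma cc_rec (n : ℕ) : cc (n+1) = (3 * cc n + dd n) / 8 := by
  unfold cc dd
  have h4 : ((4:ℝ))^n ≠ 0 := by positivity
  field_simp
  ring

private lemma dd_rec (n : ℕ) : dd (n+1) = (cc n + 3 * dd n) / 8 := by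
  unfold cc dd
  have h4 : ((4:ℝ))^n ≠ 0 := by positivity
  field_simp
  ring

theorem stmt1 {X Y : Type*} [AddCommGroup X] [AddCommGroup Y] [Module ℝ Y]
    (β : ℝ) (hβ : 0 < β)
    (N : Y → ℝ)
    (hN0 : ∀ y : Y, N y = 0 ↔ y = 0)
    (htri : ∀ y z : Y, N (y + z) ≤ N y + N z)
    (hhom : ∀ (t : ℝ) (y : Y), N (t • y) = |t| ^ β * N y)
    (ε : ℝ) (hε : 0 ≤ ε)
    (a : ℝ) (ha : a = ((2 : ℝ) ^ (β + 2) + (3 : ℝ) ^ (β + 1) + 3) / (8 : ℝ) ^ β)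
    (b : ℝ)
    (hb : b = a * (1 + ∑' k : ℕ,
      ((((2 : ℝ) ^ (k + 1) + 1) / (2 * (4 : ℝ) ^ (k + 1))) ^ β +
       (((2 : ℝ) ^ (k + 1) - 1) / (2 * (4 : ℝ) ^ (k + 1))) ^ β)))
    (f : X → Y)
    (hf : ∀ x : X, N (f (2 • x) - (3 / 8 : ℝ) • f (4 • x) + (1 / 8 : ℝ) • f (-(4 • x))) ≤ a * ε) :
    ∀ n : ℕ, 1 ≤ n → ∀ x : X,
      N (f (2 • x) - ((((2 : ℝ) ^ n + 1) / (2 * (4 : ℝ) ^ n)) • f (2 ^ (n + 1) • x))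
        + ((((2 : ℝ) ^ n - 1) / (2 * (4 : ℝ) ^ n)) • f (-(2 ^ (n + 1) • x)))) ≤ b * ε := by
  have hN0' : N 0 = 0 := (hN0 0).mpr rfl
  have hNneg : ∀ y : Y, N (-y) = N y := by
    intro y
    have h := hhom (-1) y
    simpa using h
  have hNnn : ∀ y : Y, 0 ≤ N y := by
    intro y
    have h := htri y (-y)
    rw [add_neg_cancel, hN0', hNneg] at h
    linarith
  have ha0 : 0 ≤ a := by
    rw [ha]
    have h1 : (0:ℝ) < (2:ℝ) ^ (β + 2) := Real.rpow_pos_of_pos (by norm_num) _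
    have h2 : (0:ℝ) < (3:ℝ) ^ (β + 1) := Real.rpow_pos_of_pos (by norm_num) _
    have h3 : (0:ℝ) < (8:ℝ) ^ β := Real.rpow_pos_of_pos (by norm_num) _
    positivity
  have haε : 0 ≤ a * ε := mul_nonneg ha0 hε
  -- summability of the series
  set r : ℝ := (1/2:ℝ) ^ β with hr
  have hr0 : 0 ≤ r := Real.rpow_nonneg (by norm_num) _
  have hr1 : r < 1 := Real.rpow_lt_one (by norm_num) (by norm_num) hβ
  have hrpow : ∀ (n : ℕ) (x : ℝ), 0 ≤ x → (x ^ n) ^ β = (x ^ β) ^ n := by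
    intro n x hx
    rw [← Real.rpow_natCast (x ^ β) n, ← Real.rpow_mul hx,
        ← Real.rpow_natCast x n, ← Real.rpow_mul hx, mul_comm]
  have htnn : ∀ k : ℕ, 0 ≤ cc (k+1) ^ β + dd (k+1) ^ β := by
    intro k
    have := Real.rpow_nonneg (cc_nonneg (k+1)) β
    have := Real.rpow_nonneg (dd_nonneg (k+1)) β
    linarith
  have htle : ∀ k : ℕ, cc (k+1) ^ β + dd (k+1) ^ β ≤ (2*r) * r ^ k := by
    intro k
    have h1 : cc (k+1) ^ β ≤ ((1/2:ℝ)^(k+1)) ^ β :=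
      Real.rpow_le_rpow (cc_nonneg _) (cc_le _) hβ.le
    have h2 : dd (k+1) ^ β ≤ ((1/2:ℝ)^(k+1)) ^ β :=
      Real.rpow_le_rpow (dd_nonneg _) ((dd_le_cc _).trans (cc_le _)) hβ.le
    have h3 : ((1/2:ℝ)^(k+1)) ^ β = r * r ^ k := by
      rw [hrpow (k+1) (1/2) (by norm_num), pow_succ, mul_comm]
    rw [h3] at h1 h2
    linarith
  have hsum : Summable (fun k : ℕ => cc (k+1) ^ β + dd (k+1) ^ β) := by
    apply Summable.of_nonneg_of_le htnn htle
    exact (summable_geometric_of_lt_one hr0 hr1).mul_left _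
  -- main induction
  have key : ∀ n : ℕ, ∀ x : X,
      N (f (2 • x) - cc (n+1) • f (2 ^ (n + 2) • x) + dd (n+1) • f (-(2 ^ (n + 2) • x)))
        ≤ a * ε * (1 + ∑ k ∈ Finset.range n, (cc (k+1) ^ β + dd (k+1) ^ β)) := by
    intro n
    induction n with
    | zero =>
      intro x
      have h1 : cc 1 = (3/8:ℝ) := by unfold cc; norm_num
      have h2 : dd 1 = (1/8:ℝ) := by unfold dd; norm_num
      have h3 : ((2:ℕ)^(0+2) : ℕ) = 4 := by norm_num
      rw [h1, h2, h3]
      simpa using hf x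
    | succ n ih =>
      intro x
      have e1 : (2:ℕ) • ((2:ℕ)^(n+1) • x) = 2^(n+2) • x := by
        rw [smul_smul]; congr 1; ring
      have e2 : (4:ℕ) • ((2:ℕ)^(n+1) • x) = 2^(n+3) • x := by
        rw [smul_smul]; congr 1; ring
      have hg1 := hf ((2:ℕ)^(n+1) • x)
      rw [e1, e2] at hg1
      have hg2 := hf (-((2:ℕ)^(n+1) • x))
      rw [smul_neg, smul_neg, neg_neg, e1, e2] at hg2
      have hid : f (2 • x) - cc (n+2) • f (2 ^ (n+3) • x) + dd (n+2) • f (-(2 ^ (n+3) • x))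
          = (f (2 • x) - cc (n+1) • f (2 ^ (n+2) • x) + dd (n+1) • f (-(2 ^ (n+2) • x)))
            + cc (n+1) • (f (2^(n+2) • x) - (3/8 : ℝ) • f (2^(n+3) • x)
                + (1/8 : ℝ) • f (-(2^(n+3) • x)))
            + (-(dd (n+1) • (f (-(2^(n+2) • x)) - (3/8 : ℝ) • f (-(2^(n+3) • x))
                + (1/8 : ℝ) • f (2^(n+3) • x)))) := by
        rw [cc_rec (n+1), dd_rec (n+1)]
        module
      have hcb : (0:ℝ) ≤ cc (n+1) ^ β := Real.rpow_nonneg (cc_nonneg _) _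
      have hdb : (0:ℝ) ≤ dd (n+1) ^ β := Real.rpow_nonneg (dd_nonneg _) _
      calc N (f (2 • x) - cc (n+2) • f (2 ^ (n+3) • x) + dd (n+2) • f (-(2 ^ (n+3) • x)))
          ≤ N ((f (2 • x) - cc (n+1) • f (2 ^ (n+2) • x) + dd (n+1) • f (-(2 ^ (n+2) • x)))
              + cc (n+1) • (f (2^(n+2) • x) - (3/8 : ℝ) • f (2^(n+3) • x)
                + (1/8 : ℝ) • f (-(2^(n+3) • x))))
            + N (-(dd (n+1) • (f (-(2^(n+2) • x)) - (3/8 : ℝ) • f (-(2^(n+3) • x))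
                + (1/8 : ℝ) • f (2^(n+3) • x)))) := by
              rw [hid]; exact htri _ _
        _ ≤ N (f (2 • x) - cc (n+1) • f (2 ^ (n+2) • x) + dd (n+1) • f (-(2 ^ (n+2) • x)))
            + N (cc (n+1) • (f (2^(n+2) • x) - (3/8 : ℝ) • f (2^(n+3) • x)
                + (1/8 : ℝ) • f (-(2^(n+3) • x))))
            + N (dd (n+1) • (f (-(2^(n+2) • x)) - (3/8 : ℝ) • f (-(2^(n+3) • x))
                + (1/8 : ℝ) • f (2^(n+3) • x))) := by
              rw [hNneg]
              have := htri (f (2 • x) - cc (n+1) • f (2 ^ (n+2) • x)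
                  + dd (n+1) • f (-(2 ^ (n+2) • x)))
                (cc (n+1) • (f (2^(n+2) • x) - (3/8 : ℝ) • f (2^(n+3) • x)
                  + (1/8 : ℝ) • f (-(2^(n+3) • x))))
              linarith
        _ = N (f (2 • x) - cc (n+1) • f (2 ^ (n+2) • x) + dd (n+1) • f (-(2 ^ (n+2) • x)))
            + cc (n+1) ^ β * N (f (2^(n+2) • x) - (3/8 : ℝ) • f (2^(n+3) • x)
                + (1/8 : ℝ) • f (-(2^(n+3) • x)))
            + dd (n+1) ^ β * N (f (-(2^(n+2) • x)) - (3/8 : ℝ) • f (-(2^(n+3) • x))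
                + (1/8 : ℝ) • f (2^(n+3) • x)) := by
              rw [hhom, hhom, abs_of_nonneg (cc_nonneg _), abs_of_nonneg (dd_nonneg _)]
        _ ≤ a * ε * (1 + ∑ k ∈ Finset.range n, (cc (k+1) ^ β + dd (k+1) ^ β))
            + cc (n+1) ^ β * (a * ε) + dd (n+1) ^ β * (a * ε) :=
              add_le_add (add_le_add (ih x)
                (mul_le_mul_of_nonneg_left hg1 hcb))
                (mul_le_mul_of_nonneg_left hg2 hdb)
        _ = a * ε * (1 + ∑ k ∈ Finset.range (n+1), (cc (k+1) ^ β + dd (k+1) ^ β)) := by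
              rw [Finset.sum_range_succ]; ring
  -- conclude
  intro n hn x
  obtain ⟨m, rfl⟩ := Nat.exists_eq_add_of_le hn
  simp only [show 1 + m = m + 1 by omega]
  refine le_trans (key m x) ?_
  have hb' : b = a * (1 + ∑' k : ℕ, (cc (k+1) ^ β + dd (k+1) ^ β)) := hb
  have hpart : ∑ k ∈ Finset.range m, (cc (k+1) ^ β + dd (k+1) ^ β)
      ≤ ∑' k : ℕ, (cc (k+1) ^ β + dd (k+1) ^ β) :=
    Summable.sum_le_tsum _ (fun i _ => htnn i) hsum
  calc a * ε * (1 + ∑ k ∈ Finset.range m, (cc (k+1) ^ β + dd (k+1) ^ β))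
      ≤ a * ε * (1 + ∑' k : ℕ, (cc (k+1) ^ β + dd (k+1) ^ β)) :=
        mul_le_mul_of_nonneg_left (by linarith) haε
    _ = b * ε := by rw [hb']; ring
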